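/- The map SAF : 𝒢_I → ℝ ⊗_ℚ ℝ sending an interval exchange transformation f to Σ_i λ_i ⊗ t_i (over any partition of I into half-open intervals of lengths λ_i on which f translates by t_i) is a group homomorphism: SAF(f ∘ g) = SAF(f) + SAF(g). -/

import Mathlib

open scoped TensorProduct

/-- An interval exchange transformation of the half-open interval `[p, q)`:
a bijection of `[p, q)` onto itself, extended by the identity outside,
which is a translation on each piece of a finite partition of `[p, q)`
into half-open intervals. -/
def IsIET (p q : ℝ) (f : ℝ → ℝ) : Prop :=
  Set.BijOn f (Set.Ico p q) (Set.Ico p q) ∧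
  (∀ x, x ∉ Set.Ico p q → f x = x) ∧
  ∃ (n : ℕ) (pt : Fin (n + 1) → ℝ),
    StrictMono pt ∧ pt 0 = p ∧ pt (Fin.last n) = q ∧
    ∀ i : Fin n, ∃ t : ℝ,
      ∀ x ∈ Set.Ico (pt i.castSucc) (pt i.succ), f x = x + t

/-- A restricted rotation of type `(a, b)` on `[p, q)`: it exchanges two
adjacent half-open intervals of lengths `a` (on the left) and `b` (on the
right) by translation, fixing the rest of the line. -/
def IsRestrictedRotation (p q a b : ℝ) (f : ℝ → ℝ) : Prop :=
  0 < a ∧ 0 < b ∧ ∃ x : ℝ, p ≤ x ∧ x + a + b ≤ q ∧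
    (∀ y ∈ Set.Ico x (x + a), f y = y + b) ∧
    (∀ y ∈ Set.Ico (x + a) (x + a + b), f y = y - a) ∧
    (∀ y, y ∉ Set.Ico x (x + a + b) → f y = y)

/-- An interval swap map of type `a` on `[p, q)`: it interchanges two
disjoint half-open intervals of length `a` by translation, fixing the
rest of the line. -/
def IsIntervalSwap (p q a : ℝ) (f : ℝ → ℝ) : Prop :=
  0 < a ∧ ∃ x y : ℝ, p ≤ x ∧ x + a ≤ y ∧ y + a ≤ q ∧
    (∀ z ∈ Set.Ico x (x + a), f z = z + (y - x)) ∧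
    (∀ z ∈ Set.Ico y (y + a), f z = z - (y - x)) ∧
    (∀ z, z ∉ Set.Ico x (x + a) ∪ Set.Ico y (y + a) → f z = z)

/-- `f` is a finite product (composition) of interval swap maps on `[p, q)`. -/
def IsSwapProduct (p q : ℝ) (f : ℝ → ℝ) : Prop :=
  ∃ L : List (ℝ → ℝ), (∀ g ∈ L, ∃ a, IsIntervalSwap p q a g) ∧
    f = L.foldr (· ∘ ·) id

/-- `ξ ∈ ℝ ⊗[ℚ] ℝ` is the SAF sum of `f` computed from some partition of
`[p, q)` into half-open intervals on each of which `f` is a translation. -/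
def HasSAF (p q : ℝ) (f : ℝ → ℝ) (ξ : ℝ ⊗[ℚ] ℝ) : Prop :=
  ∃ (n : ℕ) (pt : Fin (n + 1) → ℝ) (t : Fin n → ℝ),
    StrictMono pt ∧ pt 0 = p ∧ pt (Fin.last n) = q ∧
    (∀ i : Fin n, ∀ x ∈ Set.Ico (pt i.castSucc) (pt i.succ), f x = x + t i) ∧
    ξ = ∑ i : Fin n, (pt i.succ - pt i.castSucc) ⊗ₜ[ℚ] t i

section SAFHelpers
open Set MeasureTheory

lemma saf_exists_piece {n : ℕ} {pt : Fin (n+1) → ℝ} (hm : StrictMono pt) {x : ℝ}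
    (hx : pt 0 ≤ x) (hx' : x < pt (Fin.last n)) :
    ∃ i : Fin n, x ∈ Set.Ico (pt i.castSucc) (pt i.succ) := by
  classical
  set T := Finset.univ.filter (fun j : Fin (n+1) => pt j ≤ x) with hT
  have hne : T.Nonempty := ⟨0, by simp [hT, hx]⟩
  set j := T.max' hne with hj
  have hjmem : j ∈ T := T.max'_mem hne
  have hjle : pt j ≤ x := by simpa [hT] using hjmem
  have hjn : (j : ℕ) < n := by
    by_contra h
    have : j = Fin.last n := Fin.ext (le_antisymm (Nat.lt_succ_iff.mp j.isLt) (not_lt.mp h))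
    rw [this] at hjle; linarith
  refine ⟨⟨j, hjn⟩, ⟨by simpa [Fin.castSucc] using hjle, ?_⟩⟩
  by_contra h
  have hmem : (Fin.succ ⟨j, hjn⟩ : Fin (n+1)) ∈ T := by
    simp [hT]; exact not_lt.mp h
  have := T.le_max' _ hmem
  rw [← hj] at this
  have : (j : ℕ) + 1 ≤ (j : ℕ) := this
  omega

lemma saf_piece_disjoint {n : ℕ} {pt : Fin (n+1) → ℝ} (hm : StrictMono pt) {i i' : Fin n}
    (h : i ≠ i') :
    Disjoint (Ico (pt i.castSucc) (pt i.succ)) (Ico (pt i'.castSucc) (pt i'.succ)) := by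
  have key : ∀ a b : Fin n, a < b →
      Disjoint (Ico (pt a.castSucc) (pt a.succ)) (Ico (pt b.castSucc) (pt b.succ)) := by
    intro a b hab
    have : pt a.succ ≤ pt b.castSucc := hm.monotone (by
      rw [Fin.le_def]
      simp only [Fin.val_succ, Fin.coe_castSucc]
      exact Fin.lt_def.mp hab)
    rw [Set.disjoint_left]
    rintro z ⟨_, hz2⟩ ⟨hz3, _⟩
    linarith
  rcases lt_or_gt_of_ne h with hlt | hgt
  · exact key _ _ hlt
  · exact (key _ _ hgt).symm
lemma saf_length_sum {ι : Type*} {A : Finset ι} {lo hi : ι → ℝ} {a b : ℝ}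
    (hab : a ≤ b) (hle : ∀ i ∈ A, lo i ≤ hi i)
    (hd : (A : Set ι).PairwiseDisjoint (fun i => Set.Ico (lo i) (hi i)))
    (hu : ⋃ i ∈ A, Set.Ico (lo i) (hi i) = Set.Ico a b) :
    b - a = ∑ i ∈ A, (hi i - lo i) := by
  have h1 : volume (Set.Ico a b) = ∑ i ∈ A, volume (Set.Ico (lo i) (hi i)) := by
    rw [← hu]; exact measure_biUnion_finset hd (fun i _ => measurableSet_Ico)
  calc b - a = (ENNReal.ofReal (b - a)).toReal := (ENNReal.toReal_ofReal (by linarith)).symm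
    _ = (∑ i ∈ A, volume (Set.Ico (lo i) (hi i))).toReal := by rw [← h1, Real.volume_Ico]
    _ = ∑ i ∈ A, (volume (Set.Ico (lo i) (hi i))).toReal :=
        ENNReal.toReal_sum (fun i _ => by rw [Real.volume_Ico]; exact ENNReal.ofReal_ne_top)
    _ = ∑ i ∈ A, (hi i - lo i) := Finset.sum_congr rfl (fun i hiA => by
        rw [Real.volume_Ico, ENNReal.toReal_ofReal (by linarith [hle i hiA])])

lemma saf_piece_subset {p q : ℝ} {n : ℕ} {pt : Fin (n+1) → ℝ} (hm : StrictMono pt)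
    (h0 : pt 0 = p) (hl : pt (Fin.last n) = q) (i : Fin n) :
    Set.Ico (pt i.castSucc) (pt i.succ) ⊆ Set.Ico p q := by
  intro x hx
  refine ⟨le_trans ?_ hx.1, lt_of_lt_of_le hx.2 ?_⟩
  · rw [← h0]; exact hm.monotone (Fin.zero_le _)
  · rw [← hl]; exact hm.monotone (Fin.le_last _)

lemma saf_sum_eq_canonical {p q : ℝ} {f : ℝ → ℝ} {n : ℕ} {pt : Fin (n+1) → ℝ} {t : Fin n → ℝ}
    (hm : StrictMono pt) (h0 : pt 0 = p) (hl : pt (Fin.last n) = q)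
    (ht : ∀ i : Fin n, ∀ x ∈ Set.Ico (pt i.castSucc) (pt i.succ), f x = x + t i) :
    ∑ i : Fin n, (pt i.succ - pt i.castSucc) ⊗ₜ[ℚ] t i
      = ∑ v ∈ Finset.image t Finset.univ,
          (volume (Set.Ico p q ∩ {x | f x - x = v})).toReal ⊗ₜ[ℚ] v := by
  classical
  rw [← Finset.sum_fiberwise_of_maps_to (g := t) (fun i _ => Finset.mem_image_of_mem t (Finset.mem_univ i))
      (fun i => (pt i.succ - pt i.castSucc) ⊗ₜ[ℚ] t i)]
  refine Finset.sum_congr rfl (fun v hv => ?_)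
  set A := Finset.filter (fun i => t i = v) Finset.univ with hA
  have hLv : Set.Ico p q ∩ {x | f x - x = v} = ⋃ i ∈ A, Set.Ico (pt i.castSucc) (pt i.succ) := by
    ext x
    simp only [Set.mem_inter_iff, Set.mem_setOf_eq, Set.mem_iUnion, exists_prop]
    constructor
    · rintro ⟨hx1, hx2⟩
      obtain ⟨i, hi⟩ := saf_exists_piece hm (h0 ▸ hx1.1) (hl ▸ hx1.2)
      refine ⟨i, ?_, hi⟩
      rw [hA, Finset.mem_filter]
      refine ⟨Finset.mem_univ _, ?_⟩
      have := ht i x hi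
      rw [this] at hx2; linarith
    · rintro ⟨i, hiA, hxi⟩
      have htiv : t i = v := (Finset.mem_filter.mp hiA).2
      refine ⟨saf_piece_subset hm h0 hl i hxi, ?_⟩
      rw [ht i x hxi, htiv]; ring
  have hvol : (volume (Set.Ico p q ∩ {x | f x - x = v})).toReal
      = ∑ i ∈ A, (pt i.succ - pt i.castSucc) := by
    rw [hLv, measure_biUnion_finset (fun i _ j _ hij => saf_piece_disjoint hm hij)
        (fun i _ => measurableSet_Ico)]
    rw [ENNReal.toReal_sum (fun i _ => by rw [Real.volume_Ico]; exact ENNReal.ofReal_ne_top)]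
    exact Finset.sum_congr rfl (fun i _ => by
      rw [Real.volume_Ico, ENNReal.toReal_ofReal (le_of_lt (sub_pos.mpr (hm ((Fin.castSucc_lt_succ : i.castSucc < i.succ)))))])
  rw [hvol, TensorProduct.sum_tmul]
  exact Finset.sum_congr rfl (fun i hiA => by rw [(Finset.mem_filter.mp hiA).2])

lemma saf_valueSet_eq {p q : ℝ} {f : ℝ → ℝ} {n m : ℕ}
    {pt : Fin (n+1) → ℝ} {t : Fin n → ℝ} {pt' : Fin (m+1) → ℝ} {t' : Fin m → ℝ}
    (hm : StrictMono pt) (h0 : pt 0 = p) (hl : pt (Fin.last n) = q)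
    (ht : ∀ i : Fin n, ∀ x ∈ Set.Ico (pt i.castSucc) (pt i.succ), f x = x + t i)
    (hm' : StrictMono pt') (h0' : pt' 0 = p) (hl' : pt' (Fin.last m) = q)
    (ht' : ∀ i : Fin m, ∀ x ∈ Set.Ico (pt' i.castSucc) (pt' i.succ), f x = x + t' i) :
    Finset.image t Finset.univ ⊆ Finset.image t' Finset.univ := by
  intro v hv
  obtain ⟨i, _, rfl⟩ := Finset.mem_image.mp hv
  set x := pt i.castSucc with hx
  have hxi : x ∈ Set.Ico (pt i.castSucc) (pt i.succ) := ⟨le_refl _, hm ((Fin.castSucc_lt_succ : i.castSucc < i.succ))⟩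
  have hxpq : x ∈ Set.Ico p q := saf_piece_subset hm h0 hl i hxi
  obtain ⟨i', hi'⟩ := saf_exists_piece hm' (h0' ▸ hxpq.1) (hl' ▸ hxpq.2)
  refine Finset.mem_image.mpr ⟨i', Finset.mem_univ _, ?_⟩
  have e1 := ht i x hxi
  have e2 := ht' i' x hi'
  rw [e1] at e2; linarith

lemma saf_indep {p q : ℝ} {f : ℝ → ℝ} {n m : ℕ}
    {pt : Fin (n+1) → ℝ} {t : Fin n → ℝ} {pt' : Fin (m+1) → ℝ} {t' : Fin m → ℝ}
    (hm : StrictMono pt) (h0 : pt 0 = p) (hl : pt (Fin.last n) = q)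
    (ht : ∀ i : Fin n, ∀ x ∈ Set.Ico (pt i.castSucc) (pt i.succ), f x = x + t i)
    (hm' : StrictMono pt') (h0' : pt' 0 = p) (hl' : pt' (Fin.last m) = q)
    (ht' : ∀ i : Fin m, ∀ x ∈ Set.Ico (pt' i.castSucc) (pt' i.succ), f x = x + t' i) :
    ∑ i : Fin n, (pt i.succ - pt i.castSucc) ⊗ₜ[ℚ] t i
      = ∑ i : Fin m, (pt' i.succ - pt' i.castSucc) ⊗ₜ[ℚ] t' i := by
  rw [saf_sum_eq_canonical hm h0 hl ht, saf_sum_eq_canonical hm' h0' hl' ht']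
  congr 1
  exact le_antisymm (saf_valueSet_eq hm h0 hl ht hm' h0' hl' ht')
    (saf_valueSet_eq hm' h0' hl' ht' hm h0 hl ht)

end SAFHelpers

set_option maxHeartbeats 1000000 in
/-- The SAF invariant is a homomorphism: `SAF(f ∘ g) = SAF(f) + SAF(g)`. -/
theorem saf_hom (p q : ℝ) (f g : ℝ → ℝ) (hf : IsIET p q f) (hg : IsIET p q g)
    (ξ η : ℝ ⊗[ℚ] ℝ) (hξ : HasSAF p q f ξ) (hη : HasSAF p q g η) :
    HasSAF p q (f ∘ g) (ξ + η) := by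
  classical
  open Set MeasureTheory in
  obtain ⟨n, P, t, hPm, hP0, hPl, hPt, hξv⟩ := hξ
  obtain ⟨m, Q, s, hQm, hQ0, hQl, hQt, hηv⟩ := hη
  obtain ⟨hgbij, hgout, -⟩ := hg
  by_cases hpq : p < q
  case neg =>
    have hple : p ≤ q := by rw [← hP0, ← hPl]; exact hPm.monotone (Fin.zero_le _)
    have hpq' : p = q := le_antisymm hple (not_lt.mp hpq)
    have hn : n = 0 := by
      by_contra h
      have h2 : (0 : Fin (n+1)) < Fin.last n := by
        rw [Fin.lt_def]; simp [Fin.last]; omega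
      have := hPm h2; rw [hP0, hPl] at this; linarith [hpq'.le, hpq'.ge]
    have hm0 : m = 0 := by
      by_contra h
      have h2 : (0 : Fin (m+1)) < Fin.last m := by
        rw [Fin.lt_def]; simp [Fin.last]; omega
      have := hQm h2; rw [hQ0, hQl] at this; linarith [hpq'.le, hpq'.ge]
    subst hn; subst hm0
    refine ⟨0, fun _ => p, fun i => i.elim0, ?_, rfl, hpq', fun i => i.elim0, ?_⟩
    · intro a b hab; rw [Fin.lt_def] at hab; omega
    · simp at hξv hηv ⊢; rw [hξv, hηv]; simp
  case pos =>
  -- preimages of the P-partition points under g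
  set e : Fin (n+1) → ℝ :=
    fun k => if P k ∈ Set.Ico p q then Function.invFunOn g (Set.Ico p q) (P k) else p with he
  have he_mem : ∀ k : Fin (n+1), P k ∈ Set.Ico p q → e k ∈ Set.Ico p q := by
    intro k hk
    rw [he]; simp only [if_pos hk]
    obtain ⟨a, ha, hga⟩ := hgbij.surjOn hk
    exact Function.invFunOn_mem ⟨a, ha, hga⟩
  have he_g : ∀ k : Fin (n+1), P k ∈ Set.Ico p q → g (e k) = P k := by
    intro k hk
    rw [he]; simp only [if_pos hk]
    obtain ⟨a, ha, hga⟩ := hgbij.surjOn hk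
    exact Function.invFunOn_eq ⟨a, ha, hga⟩
  -- the refined partition points
  set S : Finset ℝ := Finset.image Q Finset.univ ∪ Finset.image e Finset.univ with hS
  have hpS : p ∈ S := by
    rw [hS]; apply Finset.mem_union_left
    exact Finset.mem_image.mpr ⟨0, Finset.mem_univ _, hQ0⟩
  have hqS : q ∈ S := by
    rw [hS]; apply Finset.mem_union_left
    exact Finset.mem_image.mpr ⟨Fin.last m, Finset.mem_univ _, hQl⟩
  have hSsub : ∀ z ∈ S, p ≤ z ∧ z ≤ q := by
    intro z hz
    rw [hS, Finset.mem_union] at hz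
    rcases hz with hz | hz
    · obtain ⟨j, -, rfl⟩ := Finset.mem_image.mp hz
      constructor
      · rw [← hQ0]; exact hQm.monotone (Fin.zero_le _)
      · rw [← hQl]; exact hQm.monotone (Fin.le_last _)
    · obtain ⟨k, -, rfl⟩ := Finset.mem_image.mp hz
      by_cases hk : P k ∈ Set.Ico p q
      · have := he_mem k hk; exact ⟨this.1, this.2.le⟩
      · rw [he]; simp only [if_neg hk]; exact ⟨le_refl p, le_of_lt hpq⟩
  set N : ℕ := S.card - 1 with hN
  have hScard : S.card = N + 1 := by
    rw [hN]; exact (Nat.succ_pred_eq_of_pos (Finset.card_pos.mpr ⟨p, hpS⟩)).symm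
  set r : Fin (N+1) → ℝ := fun i => ((S.orderIsoOfFin hScard i : S) : ℝ) with hr
  have hrm : StrictMono r := by
    intro a b hab
    have := (S.orderIsoOfFin hScard).strictMono hab
    exact_mod_cast this
  have hrS : ∀ i, r i ∈ S := fun i => (S.orderIsoOfFin hScard i).2
  have hSr : ∀ z ∈ S, ∃ i, r i = z := by
    intro z hz
    exact ⟨(S.orderIsoOfFin hScard).symm ⟨z, hz⟩, by rw [hr]; simp⟩
  have hr0 : r 0 = p := by
    obtain ⟨i0, hi0⟩ := hSr p hpS
    refine le_antisymm (hi0 ▸ hrm.monotone (Fin.zero_le _)) (hSsub _ (hrS 0)).1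
  have hrl : r (Fin.last N) = q := by
    obtain ⟨i0, hi0⟩ := hSr q hqS
    refine le_antisymm (hSsub _ (hrS _)).2 (hi0 ▸ hrm.monotone (Fin.le_last _))
  have hcons : ∀ (i : Fin N), ∀ z ∈ S, ¬ (r i.castSucc < z ∧ z < r i.succ) := by
    rintro i z hz ⟨h1, h2⟩
    obtain ⟨j, rfl⟩ := hSr z hz
    have hj1 : i.castSucc < j := hrm.lt_iff_lt.mp h1
    have hj2 : j < i.succ := hrm.lt_iff_lt.mp h2
    rw [Fin.lt_def] at hj1 hj2
    simp at hj1 hj2; omega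
  have hrc_mem : ∀ i : Fin N, r i.castSucc ∈ Set.Ico p q := fun i =>
    saf_piece_subset hrm hr0 hrl i ⟨le_refl _, hrm ((Fin.castSucc_lt_succ : i.castSucc < i.succ))⟩
  -- each refined piece lies in a Q-piece, so g is a translation on it
  have hQpiece : ∀ i : Fin N,
      Set.Ico (r i.castSucc) (r i.succ) ⊆ g ⁻¹' {y | True} → True := fun _ _ => trivial
  have hg_trans : ∀ i : Fin N, ∀ x ∈ Set.Ico (r i.castSucc) (r i.succ),
      g x = x + (g (r i.castSucc) - r i.castSucc) := by
    intro i
    obtain ⟨j, hj⟩ := saf_exists_piece hQm (hQ0 ▸ (hrc_mem i).1) (hQl ▸ (hrc_mem i).2)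
    have hsub : Set.Ico (r i.castSucc) (r i.succ) ⊆ Set.Ico (Q j.castSucc) (Q j.succ) := by
      intro x hx
      refine ⟨le_trans hj.1 hx.1, lt_of_lt_of_le hx.2 ?_⟩
      by_contra h; push_neg at h
      have hQS : Q j.succ ∈ S := by
        rw [hS]; apply Finset.mem_union_left
        exact Finset.mem_image.mpr ⟨j.succ, Finset.mem_univ _, rfl⟩
      exact hcons i (Q j.succ) hQS ⟨hj.2, h⟩
    intro x hx
    rw [hQt j x (hsub hx), hQt j _ (hsub ⟨le_refl _, hrm ((Fin.castSucc_lt_succ : i.castSucc < i.succ))⟩)]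
    ring
  set w : Fin N → ℝ := fun i => g (r i.castSucc) - r i.castSucc with hw
  have hg_trans' : ∀ i : Fin N, ∀ x ∈ Set.Ico (r i.castSucc) (r i.succ), g x = x + w i :=
    fun i x hx => hg_trans i x hx
  have himg_le : ∀ i : Fin N, r i.succ + w i ≤ q := by
    intro i
    by_contra h; push_neg at h
    have hgc : g (r i.castSucc) ∈ Set.Ico p q := hgbij.mapsTo (hrc_mem i)
    have hcw : r i.castSucc + w i < q := by
      have := hgc.2; rw [hw]; simp only []; linarith
    have hx : q - w i ∈ Set.Ico (r i.castSucc) (r i.succ) := ⟨by linarith, by linarith⟩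
    have hxpq : q - w i ∈ Set.Ico p q := saf_piece_subset hrm hr0 hrl i hx
    have h2 := (hgbij.mapsTo hxpq).2
    rw [hg_trans' i _ hx] at h2
    linarith
  have himg_ge : ∀ i : Fin N, p ≤ r i.castSucc + w i := by
    intro i
    have hgc := (hgbij.mapsTo (hrc_mem i)).1
    rw [hw]; simp only []; linarith
  -- each g-image of a refined piece lies in a P-piece
  have hPpiece : ∀ i : Fin N, ∃ k : Fin n,
      Set.Ico (r i.castSucc + w i) (r i.succ + w i) ⊆ Set.Ico (P k.castSucc) (P k.succ) := by
    intro i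
    have hgc : g (r i.castSucc) ∈ Set.Ico p q := hgbij.mapsTo (hrc_mem i)
    have hgceq : g (r i.castSucc) = r i.castSucc + w i := by rw [hw]; ring
    rw [hgceq] at hgc
    obtain ⟨k, hk⟩ := saf_exists_piece hPm (hP0 ▸ hgc.1) (hPl ▸ hgc.2)
    refine ⟨k, fun y hy => ⟨le_trans hk.1 hy.1, lt_of_lt_of_le hy.2 ?_⟩⟩
    by_contra hcon; push_neg at hcon
    have hPk : P k.succ ∈ Set.Ico p q :=
      ⟨le_trans hgc.1 hk.2.le, lt_of_lt_of_le hcon (himg_le i)⟩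
    set z := P k.succ - w i with hz
    have hzmem : z ∈ Set.Ico (r i.castSucc) (r i.succ) := by
      constructor
      · have := hk.2; rw [hz]; linarith
      · rw [hz]; linarith
    have hzpq : z ∈ Set.Ico p q := saf_piece_subset hrm hr0 hrl i hzmem
    have hgz : g z = P k.succ := by rw [hg_trans' i z hzmem, hz]; ring
    have hzek : z = e k.succ := hgbij.injOn hzpq (he_mem k.succ hPk)
      (by rw [hgz, he_g k.succ hPk])
    have hzS : z ∈ S := by
      rw [hS]; apply Finset.mem_union_right
      exact Finset.mem_image.mpr ⟨k.succ, Finset.mem_univ _, hzek.symm⟩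
    refine hcons i z hzS ⟨?_, hzmem.2⟩
    have := hk.2; rw [hz]; linarith
  set kf : Fin N → Fin n := fun i => (hPpiece i).choose with hkf
  have hkfs : ∀ i : Fin N,
      Set.Ico (r i.castSucc + w i) (r i.succ + w i) ⊆ Set.Ico (P (kf i).castSucc) (P (kf i).succ) :=
    fun i => (hPpiece i).choose_spec
  set u : Fin N → ℝ := fun i => w i + t (kf i) with hu
  have hfg_trans : ∀ i : Fin N, ∀ x ∈ Set.Ico (r i.castSucc) (r i.succ), (f ∘ g) x = x + u i := by
    intro i x hx
    have h1 : g x = x + w i := hg_trans' i x hx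
    have h2 : x + w i ∈ Set.Ico (r i.castSucc + w i) (r i.succ + w i) :=
      ⟨by linarith [hx.1], by linarith [hx.2]⟩
    have := hPt (kf i) (x + w i) (hkfs i h2)
    simp only [Function.comp_apply, h1, this, hu]; ring
  refine ⟨N, r, u, hrm, hr0, hrl, hfg_trans, ?_⟩
  -- now the sum computation
  have hsplit : ∑ i : Fin N, (r i.succ - r i.castSucc) ⊗ₜ[ℚ] u i
      = (∑ i : Fin N, (r i.succ - r i.castSucc) ⊗ₜ[ℚ] w i)
        + ∑ i : Fin N, (r i.succ - r i.castSucc) ⊗ₜ[ℚ] t (kf i) := by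
    rw [← Finset.sum_add_distrib]
    exact Finset.sum_congr rfl (fun i _ => by rw [hu, TensorProduct.tmul_add])
  have hterm1 : ∑ i : Fin N, (r i.succ - r i.castSucc) ⊗ₜ[ℚ] w i = η := by
    rw [hηv]
    exact saf_indep hrm hr0 hrl hg_trans' hQm hQ0 hQl hQt
  have himg : ∀ i : Fin N, g '' Set.Ico (r i.castSucc) (r i.succ)
      = Set.Ico (r i.castSucc + w i) (r i.succ + w i) := by
    intro i
    rw [← Set.image_add_const_Ico (w i)]
    exact Set.image_congr (fun x hx => hg_trans' i x hx)
  have hterm2 : ∑ i : Fin N, (r i.succ - r i.castSucc) ⊗ₜ[ℚ] t (kf i) = ξ := by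
    rw [hξv, ← Finset.sum_fiberwise Finset.univ kf
      (fun i => (r i.succ - r i.castSucc) ⊗ₜ[ℚ] t (kf i))]
    refine Finset.sum_congr rfl (fun k _ => ?_)
    have hlen : P k.succ - P k.castSucc
        = ∑ i ∈ Finset.filter (fun i => kf i = k) Finset.univ,
            ((r i.succ + w i) - (r i.castSucc + w i)) := by
      apply saf_length_sum (lo := fun i => r i.castSucc + w i) (hi := fun i => r i.succ + w i)
      · exact (hPm ((Fin.castSucc_lt_succ : k.castSucc < k.succ))).le
      · exact fun i _ => by linarith [(hrm ((Fin.castSucc_lt_succ : i.castSucc < i.succ))).le]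
      · intro i hi j hj hij
        simp only [Function.onFun]
        rw [← himg i, ← himg j]
        rw [Set.disjoint_left]
        rintro y ⟨x1, hx1, rfl⟩ ⟨x2, hx2, hgx⟩
        have hx1pq := saf_piece_subset hrm hr0 hrl i hx1
        have hx2pq := saf_piece_subset hrm hr0 hrl j hx2
        have : x2 = x1 := hgbij.injOn hx2pq hx1pq hgx
        subst this
        exact Set.disjoint_left.mp (saf_piece_disjoint hrm hij) hx1 hx2
      · ext y
        simp only [Set.mem_iUnion, exists_prop, Finset.mem_filter, Finset.mem_univ, true_and]
        constructor
        · rintro ⟨i, hik, hy⟩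
          subst hik
          exact hkfs i hy
        · intro hy
          have hypq : y ∈ Set.Ico p q := saf_piece_subset hPm hP0 hPl k hy
          obtain ⟨x, hxpq, hgx⟩ := hgbij.surjOn hypq
          obtain ⟨i, hxi⟩ := saf_exists_piece hrm (hr0 ▸ hxpq.1) (hrl ▸ hxpq.2)
          have hyi : y ∈ Set.Ico (r i.castSucc + w i) (r i.succ + w i) := by
            rw [← hgx, hg_trans' i x hxi]
            exact ⟨by linarith [hxi.1], by linarith [hxi.2]⟩
          have hyk' : y ∈ Set.Ico (P (kf i).castSucc) (P (kf i).succ) := hkfs i hyi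
          have hkik : kf i = k := by
            by_contra hne
            exact Set.disjoint_left.mp (saf_piece_disjoint hPm hne) hyk' hy
          exact ⟨i, hkik, hyi⟩
    have : ∑ i ∈ Finset.filter (fun i => kf i = k) Finset.univ,
        (r i.succ - r i.castSucc) ⊗ₜ[ℚ] t (kf i)
        = ∑ i ∈ Finset.filter (fun i => kf i = k) Finset.univ,
        (r i.succ - r i.castSucc) ⊗ₜ[ℚ] t k := by
      refine Finset.sum_congr rfl (fun i hi => ?_)
      rw [(Finset.mem_filter.mp hi).2]
    rw [this, ← TensorProduct.sum_tmul]
    have hlen' : ∑ i ∈ Finset.filter (fun i => kf i = k) Finset.univ,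
        (r i.succ - r i.castSucc) = P k.succ - P k.castSucc := by
      rw [hlen]
      exact Finset.sum_congr rfl (fun i _ => by ring)
    rw [hlen']
  rw [hsplit, hterm1, hterm2, add_comm]
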